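/- Fix an integer m ≥ 2 and a constant C_m > 0. For k ≥ 1 set ρ_k = e^{-λ/k}, δ_k = k^{-(1+2(1-H))}, b_n^{(k)} = ρ_k(1-ρ_k^n)/(1-ρ_k) and a_{n-j}^{(k)} = (1-ρ_k^{n-j+1})/(1-ρ_k), and define κ_m(n) = C_m ∑_{k=1}^∞ (b_n^{(k)})^m δ_k + C_m ∑_{j=1}^{n} ∑_{k=1}^∞ (a_{n-j}^{(k)})^m (1-ρ_k^m) δ_k. Then there exists a finite strictly positive constant D_m such that κ_m(n) / n^{m-2(1-H)} → D_m as n → ∞; i.e., the m-th cumulant of the centered partial sum of the long-range dependent infinite superposition of OU type processes over n time points grows like D_m · L(n) · n^{m-2(1-H)} up to the convergent slowly varying factor. -/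

import Mathlib

open Filter

/-- The model `m`-th cumulant of the centered partial sum over `n` time points of the
long-range dependent infinite superposition of OU type processes:
`κ_m(n) = C_m ∑_k (b_n^{(k)})^m δ_k + C_m ∑_{j=1}^n ∑_k (a_{n-j}^{(k)})^m (1-ρ_k^m) δ_k`,
where `ρ_k = e^{-λ/k}`, `δ_k = k^{-(1+2(1-H))}`, `b_n^{(k)} = ρ_k(1-ρ_k^n)/(1-ρ_k)`,
`a_{n-j}^{(k)} = (1-ρ_k^{n-j+1})/(1-ρ_k)`. (Here `k : ℕ` with `k+1` as the index `k ≥ 1`.) -/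
noncomputable def OUcumulant (H lam Cm : ℝ) (m n : ℕ) : ℝ :=
  Cm * (∑' k : ℕ,
      (Real.exp (-lam / ((k : ℝ) + 1)) * (1 - Real.exp (-lam / ((k : ℝ) + 1)) ^ n) /
          (1 - Real.exp (-lam / ((k : ℝ) + 1)))) ^ m *
        ((k : ℝ) + 1) ^ (-(1 + 2 * (1 - H)))) +
    Cm * ∑ j ∈ Finset.Icc 1 n, ∑' k : ℕ,
      ((1 - Real.exp (-lam / ((k : ℝ) + 1)) ^ (n - j + 1)) /
          (1 - Real.exp (-lam / ((k : ℝ) + 1)))) ^ m *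
        (1 - Real.exp (-lam / ((k : ℝ) + 1)) ^ m) *
        ((k : ℝ) + 1) ^ (-(1 + 2 * (1 - H)))

namespace Stmt14

open MeasureTheory Set

/-- `ρ_{k+1} = e^{-λ/(k+1)}`. -/
noncomputable def rho (lam : ℝ) (k : ℕ) : ℝ := Real.exp (-lam / ((k : ℝ) + 1))

/-- `δ_{k+1} = (k+1)^{2H-3}`. -/
noncomputable def wgt (H : ℝ) (k : ℕ) : ℝ := ((k : ℝ) + 1) ^ (2 * H - 3)

/-- `T_ℓ^{(k)} = (1-ρ^{ℓ+1})/(1-ρ) = 1 + ρ + ⋯ + ρ^ℓ`. -/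
noncomputable def Tg (lam : ℝ) (l k : ℕ) : ℝ :=
  (1 - rho lam k ^ (l + 1)) / (1 - rho lam k)

noncomputable def Fterm (H lam : ℝ) (m l k : ℕ) : ℝ :=
  (Tg lam l k ^ m - (Tg lam l k - 1) ^ m) * wgt H k

noncomputable def useq (H lam : ℝ) (m l : ℕ) : ℝ := ∑' k, Fterm H lam m l k

section Basic

variable {H lam : ℝ} {m l k : ℕ}

lemma rho_pos : 0 < rho lam k := Real.exp_pos _

lemma rho_lt_one (hlam : 0 < lam) : rho lam k < 1 := by
  rw [rho, Real.exp_lt_one_iff]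
  have hk : (0:ℝ) < (k : ℝ) + 1 := by positivity
  exact div_neg_of_neg_of_pos (by linarith) hk

lemma one_sub_rho_pos (hlam : 0 < lam) : 0 < 1 - rho lam k :=
  sub_pos.2 (rho_lt_one hlam)

lemma rho_ne_one (hlam : 0 < lam) : rho lam k ≠ 1 := ne_of_lt (rho_lt_one hlam)

lemma Tg_eq_sum (hlam : 0 < lam) :
    Tg lam l k = ∑ i ∈ Finset.range (l + 1), rho lam k ^ i := by
  rw [geom_sum_eq (rho_ne_one hlam), Tg, ← neg_sub (1:ℝ) (rho lam k ^ (l+1)),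
    ← neg_sub (1:ℝ) (rho lam k), neg_div_neg_eq]

lemma one_le_Tg (hlam : 0 < lam) : 1 ≤ Tg lam l k := by
  rw [Tg_eq_sum hlam]
  have : (1:ℝ) = ∑ i ∈ Finset.range 1, rho lam k ^ i := by simp
  rw [this]
  apply Finset.sum_le_sum_of_subset_of_nonneg
  · exact Finset.range_subset_range.2 (by omega)
  · intro i _ _; exact pow_nonneg (le_of_lt rho_pos) i

lemma Tg_le_card (hlam : 0 < lam) : Tg lam l k ≤ (l : ℝ) + 1 := by
  rw [Tg_eq_sum hlam]
  calc ∑ i ∈ Finset.range (l + 1), rho lam k ^ i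
      ≤ ∑ i ∈ Finset.range (l + 1), 1 := by
        apply Finset.sum_le_sum
        intro i _
        exact pow_le_one₀ (le_of_lt (rho_pos (lam := lam) (k := k))) (le_of_lt (rho_lt_one hlam))
    _ = (l : ℝ) + 1 := by simp

lemma Tg_le_inv (hlam : 0 < lam) : Tg lam l k ≤ (1 - rho lam k)⁻¹ := by
  rw [Tg, div_le_iff₀ (one_sub_rho_pos hlam), inv_mul_cancel₀ (ne_of_gt (one_sub_rho_pos hlam))]
  have : 0 ≤ rho lam k ^ (l + 1) := pow_nonneg (le_of_lt rho_pos) _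
  linarith

lemma one_sub_rho_ge (hlam : 0 < lam) :
    lam / (Real.exp lam * ((k : ℝ) + 1)) ≤ 1 - rho lam k := by
  have hk : (0:ℝ) < (k : ℝ) + 1 := by positivity
  set s : ℝ := lam / ((k : ℝ) + 1) with hs
  have hs0 : 0 < s := div_pos hlam hk
  have hsl : s ≤ lam := by
    rw [hs, div_le_iff₀ hk]
    nlinarith
  have h1 : rho lam k = Real.exp (-s) := by rw [rho, hs, neg_div]
  -- 1 - e^{-s} ≥ s e^{-s} ≥ s e^{-λ}
  have h2 : s * Real.exp (-s) ≤ 1 - Real.exp (-s) := by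
    have := Real.add_one_le_exp s
    have hes : 0 < Real.exp (-s) := Real.exp_pos _
    have h5 : (s + 1) * Real.exp (-s) ≤ Real.exp s * Real.exp (-s) := by
      apply mul_le_mul_of_nonneg_right (Real.add_one_le_exp s) (le_of_lt hes)
    have h6 : Real.exp s * Real.exp (-s) = 1 := by
      rw [← Real.exp_add]; simp
    nlinarith
  have h3 : Real.exp (-lam) ≤ Real.exp (-s) := Real.exp_le_exp.2 (by linarith)
  have h4 : s * Real.exp (-lam) ≤ 1 - Real.exp (-s) := by
    calc s * Real.exp (-lam) ≤ s * Real.exp (-s) := by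
          apply mul_le_mul_of_nonneg_left h3 (le_of_lt hs0)
      _ ≤ 1 - Real.exp (-s) := h2
  rw [h1]
  calc lam / (Real.exp lam * ((k : ℝ) + 1))
      = s * Real.exp (-lam) := by
        rw [Real.exp_neg, hs, div_mul_eq_div_div_swap, div_eq_mul_inv]
    _ ≤ 1 - Real.exp (-s) := h4

lemma inv_one_sub_rho_le (hlam : 0 < lam) :
    (1 - rho lam k)⁻¹ ≤ Real.exp lam * ((k : ℝ) + 1) / lam := by
  have h := one_sub_rho_ge (k := k) hlam
  have hpos : (0:ℝ) < Real.exp lam * ((k : ℝ) + 1) := by positivity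
  have h0 : 0 < lam / (Real.exp lam * ((k : ℝ) + 1)) := div_pos hlam hpos
  calc (1 - rho lam k)⁻¹ ≤ (lam / (Real.exp lam * ((k : ℝ) + 1)))⁻¹ := by
        apply inv_anti₀ h0 h
    _ = Real.exp lam * ((k : ℝ) + 1) / lam := by
        rw [inv_div]

lemma Tg_le (hlam : 0 < lam) : Tg lam l k ≤ Real.exp lam * ((k : ℝ) + 1) / lam :=
  (Tg_le_inv hlam).trans (inv_one_sub_rho_le hlam)

lemma Tg_sub_one_nonneg (hlam : 0 < lam) : 0 ≤ Tg lam l k - 1 :=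
  sub_nonneg.2 (one_le_Tg hlam)

lemma wgt_pos : 0 < wgt H k := Real.rpow_pos_of_pos (by positivity) _

lemma wgt_le_one (hH1 : H < 1) : wgt H k ≤ 1 := by
  rw [wgt]
  apply Real.rpow_le_one_of_one_le_of_nonpos
  · have : (0:ℝ) ≤ (k:ℝ) := Nat.cast_nonneg k
    linarith
  · linarith

lemma wgt_summable (hH1 : H < 1) : Summable (wgt H) := by
  have h : (2 * H - 3 : ℝ) < -1 := by linarith
  have h2 : Summable (fun n : ℕ => (n : ℝ) ^ (2 * H - 3)) := Real.summable_nat_rpow.2 h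
  have h3 := (summable_nat_add_iff 1).2 h2
  apply h3.congr
  intro k
  push_cast
  rfl

lemma Fterm_nonneg (hlam : 0 < lam) : 0 ≤ Fterm H lam m l k := by
  apply mul_nonneg _ (le_of_lt wgt_pos)
  have h1 : (0:ℝ) ≤ Tg lam l k - 1 := Tg_sub_one_nonneg hlam
  have h2 : Tg lam l k - 1 ≤ Tg lam l k := by linarith
  have := pow_le_pow_left₀ h1 h2 m
  linarith

lemma Fterm_le (hlam : 0 < lam) :
    Fterm H lam m l k ≤ ((l : ℝ) + 1) ^ m * wgt H k := by
  apply mul_le_mul_of_nonneg_right _ (le_of_lt wgt_pos)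
  have h1 : (0:ℝ) ≤ Tg lam l k - 1 := Tg_sub_one_nonneg hlam
  have h2 : (0:ℝ) ≤ (Tg lam l k - 1) ^ m := by positivity
  have h3 : Tg lam l k ^ m ≤ ((l : ℝ) + 1) ^ m := by
    apply pow_le_pow_left₀ _ (Tg_le_card hlam)
    linarith [one_le_Tg (l := l) (k := k) hlam]
  linarith

lemma Fterm_summable (hH1 : H < 1) (hlam : 0 < lam) :
    Summable (fun k => Fterm H lam m l k) := by
  apply Summable.of_nonneg_of_le (fun k => Fterm_nonneg hlam)
    (fun k => Fterm_le hlam)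
  exact (wgt_summable hH1).mul_left _

end Basic

section Identity

variable {H lam : ℝ} {m : ℕ}

lemma body2_summable (hH1 : H < 1) (hlam : 0 < lam) (l : ℕ) :
    Summable (fun k => Tg lam l k ^ m * (1 - rho lam k ^ m) * wgt H k) := by
  apply Summable.of_nonneg_of_le _ _ ((wgt_summable hH1).mul_left (((l:ℝ)+1)^m))
  · intro k
    have h0 : (0:ℝ) ≤ Tg lam l k := le_trans zero_le_one (one_le_Tg hlam)
    have h1 : rho lam k ^ m ≤ 1 :=
      pow_le_one₀ (le_of_lt rho_pos) (le_of_lt (rho_lt_one hlam))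
    have h2 : (0:ℝ) ≤ Tg lam l k ^ m := pow_nonneg h0 m
    have hw := le_of_lt (wgt_pos (H := H) (k := k))
    exact mul_nonneg (mul_nonneg h2 (by linarith)) hw
  · intro k
    have h0 : (0:ℝ) ≤ Tg lam l k := le_trans zero_le_one (one_le_Tg hlam)
    have h1 : Tg lam l k ^ m ≤ ((l:ℝ)+1) ^ m := pow_le_pow_left₀ h0 (Tg_le_card hlam) m
    have h2 : 1 - rho lam k ^ m ≤ 1 := by
      have : (0:ℝ) ≤ rho lam k ^ m := pow_nonneg (le_of_lt rho_pos) m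
      linarith
    have h3 : 0 ≤ 1 - rho lam k ^ m := by
      have : rho lam k ^ m ≤ 1 :=
        pow_le_one₀ (le_of_lt rho_pos) (le_of_lt (rho_lt_one hlam))
      linarith
    have hw := le_of_lt (wgt_pos (H := H) (k := k))
    have h4 : Tg lam l k ^ m * (1 - rho lam k ^ m) ≤ ((l:ℝ)+1) ^ m := by
      nlinarith [pow_nonneg h0 m]
    exact mul_le_mul_of_nonneg_right h4 hw

lemma b_eq (hlam : 0 < lam) (n k : ℕ) :
    rho lam k * (1 - rho lam k ^ n) / (1 - rho lam k) = Tg lam n k - 1 := by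
  have hq : (1 : ℝ) - rho lam k ≠ 0 := ne_of_gt (one_sub_rho_pos hlam)
  rw [Tg]
  field_simp
  ring

lemma body1_summable (hH1 : H < 1) (hlam : 0 < lam) (n : ℕ) :
    Summable (fun k =>
      (rho lam k * (1 - rho lam k ^ n) / (1 - rho lam k)) ^ m * wgt H k) := by
  apply Summable.of_nonneg_of_le _ _ ((wgt_summable hH1).mul_left (((n:ℝ)+1)^m))
  · intro k
    rw [b_eq hlam]
    exact mul_nonneg (pow_nonneg (Tg_sub_one_nonneg hlam) m) (le_of_lt wgt_pos)
  · intro k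
    rw [b_eq hlam]
    apply mul_le_mul_of_nonneg_right _ (le_of_lt wgt_pos)
    apply pow_le_pow_left₀ (Tg_sub_one_nonneg hlam)
    have := Tg_le_card (l := n) (k := k) hlam
    linarith

/-- The key per-`k` algebraic identity. -/
lemma key_ident (hlam : 0 < lam) (hm : 2 ≤ m) (n k : ℕ) :
    (rho lam k * (1 - rho lam k ^ n) / (1 - rho lam k)) ^ m * wgt H k
      + ∑ l ∈ Finset.range n, (Tg lam l k ^ m * (1 - rho lam k ^ m) * wgt H k)
    = ∑ l ∈ Finset.range n, Fterm H lam m l k := by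
  have hq : (1 : ℝ) - rho lam k ≠ 0 := ne_of_gt (one_sub_rho_pos hlam)
  set q := rho lam k with hqdef
  have hstep : ∀ l : ℕ, Tg lam l k ^ m * (1 - q ^ m)
      = Tg lam l k ^ m - (Tg lam (l + 1) k - 1) ^ m := by
    intro l
    have hql : q * Tg lam l k = Tg lam (l + 1) k - 1 := by
      rw [Tg, Tg, ← hqdef]
      field_simp
      ring
    rw [← hql, mul_pow]
    ring
  have htel : ∑ l ∈ Finset.range n, (Tg lam l k ^ m * (1 - q ^ m))
      = ∑ l ∈ Finset.range n, (Tg lam l k ^ m - (Tg lam l k - 1) ^ m)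
        - (Tg lam n k - 1) ^ m + (Tg lam 0 k - 1) ^ m := by
    rw [Finset.sum_congr rfl (fun l _ => hstep l)]
    rw [Finset.sum_sub_distrib]
    have e1 := Finset.sum_range_succ (fun l => (Tg lam l k - 1) ^ m) n
    have e2 := Finset.sum_range_succ' (fun l => (Tg lam l k - 1) ^ m) n
    rw [Finset.sum_sub_distrib]
    linarith [e1, e2]
  have hT0 : Tg lam 0 k = 1 := by
    rw [Tg, pow_one]
    exact div_self hq
  have hm0 : m ≠ 0 := by omega
  calc (q * (1 - q ^ n) / (1 - q)) ^ m * wgt H k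
        + ∑ l ∈ Finset.range n, (Tg lam l k ^ m * (1 - q ^ m) * wgt H k)
      = ((Tg lam n k - 1) ^ m
          + ∑ l ∈ Finset.range n, (Tg lam l k ^ m * (1 - q ^ m))) * wgt H k := by
        rw [b_eq hlam, add_mul, Finset.sum_mul]
    _ = (∑ l ∈ Finset.range n, (Tg lam l k ^ m - (Tg lam l k - 1) ^ m)) * wgt H k := by
        rw [htel, hT0, sub_self, zero_pow hm0]
        ring
    _ = ∑ l ∈ Finset.range n, Fterm H lam m l k := by
        rw [Finset.sum_mul]
        exact Finset.sum_congr rfl fun l _ => rfl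

lemma sum_Icc_reindex (f : ℕ → ℝ) (n : ℕ) :
    ∑ j ∈ Finset.Icc 1 n, f (n - j) = ∑ l ∈ Finset.range n, f l := by
  apply Finset.sum_nbij' (i := fun j => n - j) (j := fun l => n - l)
  · intro a ha
    simp only [Finset.mem_Icc] at ha
    simp only [Finset.mem_range]
    omega
  · intro a ha
    simp only [Finset.mem_range] at ha
    simp only [Finset.mem_Icc]
    omega
  · intro a ha
    simp only [Finset.mem_Icc] at ha
    omega
  · intro a ha
    simp only [Finset.mem_range] at ha
    omega
  · intro a _
    rfl

lemma cumulant_eq (hH1 : H < 1) (hlam : 0 < lam) (hm : 2 ≤ m) (Cm : ℝ) (n : ℕ) :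
    OUcumulant H lam Cm m n = Cm * ∑ l ∈ Finset.range n, useq H lam m l := by
  have hrw1 : ∀ k : ℕ, Real.exp (-lam / ((k : ℝ) + 1)) = rho lam k := fun _ => rfl
  have hrw2 : (-(1 + 2 * (1 - H)) : ℝ) = 2 * H - 3 := by ring
  have hrw3 : ∀ k : ℕ, ((k : ℝ) + 1) ^ (2 * H - 3) = wgt H k := fun _ => rfl
  have hrw4 : ∀ l k : ℕ, (1 - rho lam k ^ (l + 1)) / (1 - rho lam k) = Tg lam l k :=
    fun _ _ => rfl
  unfold OUcumulant
  simp only [hrw1, hrw2, hrw3, hrw4]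
  have hs2 : ∀ j ∈ Finset.Icc 1 n,
      Summable (fun k => Tg lam (n - j) k ^ m * (1 - rho lam k ^ m) * wgt H k) :=
    fun j _ => body2_summable hH1 hlam (n - j)
  rw [← Summable.tsum_finsetSum hs2, ← mul_add,
    ← Summable.tsum_add (body1_summable hH1 hlam n) (summable_sum hs2)]
  have hper : ∀ k : ℕ,
      ((rho lam k * (1 - rho lam k ^ n) / (1 - rho lam k)) ^ m * wgt H k
        + ∑ j ∈ Finset.Icc 1 n, Tg lam (n - j) k ^ m * (1 - rho lam k ^ m) * wgt H k)
      = ∑ l ∈ Finset.range n, Fterm H lam m l k := by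
    intro k
    rw [sum_Icc_reindex (fun l => Tg lam l k ^ m * (1 - rho lam k ^ m) * wgt H k) n]
    exact key_ident hlam hm n k
  rw [tsum_congr hper, Summable.tsum_finsetSum (fun l _ => Fterm_summable hH1 hlam)]
  rfl

end Identity

section Analysis

variable {H lam : ℝ} {m : ℕ}

/-- scaling limit of `T_{⌊ℓx⌋}/ℓ`. -/
noncomputable def phiF (lam x : ℝ) : ℝ := x * (1 - Real.exp (-lam / x)) / lam

/-- the limiting density. -/
noncomputable def hfun (H lam : ℝ) (m : ℕ) (x : ℝ) : ℝ :=
  x ^ (2 * H - 3) * ((m : ℝ) * phiF lam x ^ (m - 1))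

noncomputable def gk (H lam : ℝ) (m l k : ℕ) : ℝ :=
  (((k : ℝ) + 1) / (l : ℝ)) ^ (2 * H - 3) *
    ((Tg lam l k ^ m - (Tg lam l k - 1) ^ m) / (l : ℝ) ^ (m - 1))

noncomputable def Gfun (H lam : ℝ) (m l : ℕ) (x : ℝ) : ℝ := gk H lam m l ⌊(l : ℝ) * x⌋₊

noncomputable def Cbig (lam : ℝ) (m : ℕ) : ℝ :=
  (m : ℝ) * (2 * (1 + Real.exp lam / lam)) ^ m

noncomputable def Mb (H lam : ℝ) (m : ℕ) (x : ℝ) : ℝ :=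
  if x ≤ 1 then Cbig lam m * x ^ (2 * H - 2) else Cbig lam m * x ^ (2 * H - 3)

lemma diff_eq (T : ℝ) (m : ℕ) :
    T ^ m - (T - 1) ^ m = ∑ i ∈ Finset.range m, T ^ i * (T - 1) ^ (m - 1 - i) := by
  have h := geom_sum₂_mul T (T - 1) m
  have h2 : T - (T - 1) = 1 := by ring
  rw [h2, mul_one] at h
  exact h.symm

lemma diff_le {T : ℝ} (hT : 1 ≤ T) (m : ℕ) :
    T ^ m - (T - 1) ^ m ≤ (m : ℝ) * T ^ (m - 1) := by
  rw [diff_eq]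
  have hT0 : (0:ℝ) ≤ T := by linarith
  have hT10 : (0:ℝ) ≤ T - 1 := by linarith
  calc ∑ i ∈ Finset.range m, T ^ i * (T - 1) ^ (m - 1 - i)
      ≤ ∑ _i ∈ Finset.range m, T ^ (m - 1) := by
        apply Finset.sum_le_sum
        intro i hi
        rw [Finset.mem_range] at hi
        calc T ^ i * (T - 1) ^ (m - 1 - i)
            ≤ T ^ i * T ^ (m - 1 - i) := by
              apply mul_le_mul_of_nonneg_left
                (pow_le_pow_left₀ hT10 (by linarith) _) (pow_nonneg hT0 i)
          _ = T ^ (m - 1) := by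
              rw [← pow_add]
              congr 1
              omega
    _ = (m : ℝ) * T ^ (m - 1) := by
        rw [Finset.sum_const, Finset.card_range, nsmul_eq_mul]

lemma diff_nonneg {T : ℝ} (hT : 1 ≤ T) (m : ℕ) : 0 ≤ T ^ m - (T - 1) ^ m := by
  have h1 : (0:ℝ) ≤ T - 1 := by linarith
  have := pow_le_pow_left₀ h1 (by linarith : T - 1 ≤ T) m
  linarith

lemma gk_nonneg (hlam : 0 < lam) {l k : ℕ} : 0 ≤ gk H lam m l k := by
  apply mul_nonneg
  · apply Real.rpow_nonneg
    positivity
  · exact div_nonneg (diff_nonneg (one_le_Tg hlam) m) (by positivity)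

lemma Gfun_nonneg (hlam : 0 < lam) {l : ℕ} {x : ℝ} : 0 ≤ Gfun H lam m l x :=
  gk_nonneg hlam

lemma Gfun_zero (hH1 : H < 1) (x : ℝ) : Gfun H lam m 0 x = 0 := by
  rw [Gfun, gk]
  norm_num
  exact Or.inl (Real.zero_rpow (by linarith))

lemma Cbig_pos (hlam : 0 < lam) (hm : 2 ≤ m) : 0 < Cbig lam m := by
  rw [Cbig]
  have h1 : (0:ℝ) < 1 + Real.exp lam / lam := by positivity
  have h2 : (0:ℝ) < (m:ℝ) := by exact_mod_cast (by omega : 0 < m)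
  positivity

lemma Mb_nonneg (hlam : 0 < lam) (hm : 2 ≤ m) {x : ℝ} (hx : 0 < x) :
    0 ≤ Mb H lam m x := by
  have := Cbig_pos (m := m) hlam hm
  rw [Mb]
  split <;> positivity

/-- the uniform domination `G_ℓ(x) ≤ M(x)`. -/
lemma Gfun_le (hH2 : 1/2 < H) (hH1 : H < 1) (hlam : 0 < lam) (hm : 2 ≤ m)
    (l : ℕ) {x : ℝ} (hx : 0 < x) : Gfun H lam m l x ≤ Mb H lam m x := by
  rcases Nat.eq_zero_or_pos l with hl | hl
  · rw [hl, Gfun_zero hH1]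
    exact Mb_nonneg hlam hm hx
  have hl1 : (1:ℝ) ≤ (l:ℝ) := by exact_mod_cast hl
  have hl0 : (0:ℝ) < (l:ℝ) := by linarith
  have hm0 : (0:ℝ) ≤ (m:ℝ) := by positivity
  set E : ℝ := Real.exp lam / lam with hE
  have hE0 : 0 < E := by rw [hE]; positivity
  have hE1 : (1:ℝ) ≤ 1 + E := by linarith
  have hCbig : Cbig lam m = (m:ℝ) * (2*(1+E))^m := by rw [Cbig, ← hE]
  set k := ⌊(l : ℝ) * x⌋₊ with hk
  set T := Tg lam l k with hTdef
  set y := ((k : ℝ) + 1) / (l : ℝ) with hy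
  have hT1 : 1 ≤ T := one_le_Tg hlam
  have hky : (l : ℝ) * x < (k : ℝ) + 1 := Nat.lt_floor_add_one _
  have hxy : x < y := by
    rw [hy, lt_div_iff₀ hl0]
    linarith
  have hy2 : y ≤ x + 1 := by
    rw [hy, div_le_iff₀ hl0]
    have h1 : (k : ℝ) ≤ (l : ℝ) * x := Nat.floor_le (by positivity)
    nlinarith
  have hy0 : 0 < y := lt_trans hx hxy
  have hdiff : T ^ m - (T - 1) ^ m ≤ (m : ℝ) * T ^ (m - 1) := diff_le hT1 m
  have hT0 : (0:ℝ) ≤ T := by linarith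
  have hGeq : Gfun H lam m l x
      = y ^ (2*H-3) * ((T ^ m - (T - 1) ^ m) / (l:ℝ) ^ (m - 1)) := rfl
  have hyr0 : (0:ℝ) ≤ y ^ (2*H-3) := Real.rpow_nonneg (le_of_lt hy0) _
  by_cases hx1 : x ≤ 1
  · -- small x regime
    have hTle : T ≤ E * ((k:ℝ) + 1) := by
      have h := Tg_le (l := l) (k := k) hlam
      rw [hTdef, hE]
      calc Tg lam l k ≤ Real.exp lam * ((k:ℝ)+1)/lam := h
        _ = Real.exp lam / lam * ((k:ℝ)+1) := by ring
    have h2 : (T ^ m - (T - 1) ^ m) / (l:ℝ) ^ (m - 1) ≤ (m:ℝ) * (E * y) ^ (m-1) := by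
      rw [div_le_iff₀ (by positivity)]
      calc T ^ m - (T-1)^m ≤ (m:ℝ) * T ^ (m-1) := hdiff
        _ ≤ (m:ℝ) * (E * ((k:ℝ)+1)) ^ (m-1) :=
            mul_le_mul_of_nonneg_left (pow_le_pow_left₀ hT0 hTle _) hm0
        _ = (m:ℝ) * (E * y) ^ (m-1) * (l:ℝ) ^ (m-1) := by
            rw [mul_assoc, ← mul_pow]
            congr 2
            rw [hy]
            field_simp
    have h3 : Gfun H lam m l x ≤ y ^ (2*H-3) * ((m:ℝ) * (E*y)^(m-1)) := by
      rw [hGeq]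
      exact mul_le_mul_of_nonneg_left h2 hyr0
    have hyy : y * y ^ (2*H-3) = y ^ (2*H-2) := by
      nth_rewrite 1 [← Real.rpow_one y]
      rw [← Real.rpow_add hy0]
      congr 1
      ring
    have h4 : y ^ (2*H-3) * ((m:ℝ) * (E*y)^(m-1))
        = (m:ℝ) * E^(m-1) * (y^(m-2) * (y * y^(2*H-3))) := by
      rw [mul_pow]
      have hmm : m - 1 = (m-2) + 1 := by omega
      rw [hmm, pow_succ y (m-2)]
      ring
    have h5 : y^(m-2) * (y * y^(2*H-3)) ≤ 2^(m-2) * x^(2*H-2) := by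
      rw [hyy]
      apply mul_le_mul
      · exact pow_le_pow_left₀ (le_of_lt hy0) (by linarith) _
      · exact Real.rpow_le_rpow_of_nonpos hx (le_of_lt hxy) (by linarith)
      · exact Real.rpow_nonneg (le_of_lt hy0) _
      · positivity
    have h6 : (m:ℝ) * E^(m-1) * (2^(m-2) * x^(2*H-2))
        = ((m:ℝ) * (E^(m-1) * 2^(m-2))) * x^(2*H-2) := by ring
    have h7 : (m:ℝ) * (E^(m-1) * 2^(m-2)) ≤ Cbig lam m := by
      rw [hCbig]
      apply mul_le_mul_of_nonneg_left _ hm0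
      calc E^(m-1) * 2^(m-2)
          ≤ (1+E)^m * 2^m := by
            apply mul_le_mul
            · calc E^(m-1) ≤ (1+E)^(m-1) :=
                    pow_le_pow_left₀ (le_of_lt hE0) (by linarith) _
                _ ≤ (1+E)^m := pow_le_pow_right₀ hE1 (by omega)
            · exact pow_le_pow_right₀ one_le_two (by omega)
            · positivity
            · positivity
        _ = (2*(1+E))^m := by rw [mul_pow]; ring
    have hxr2 : (0:ℝ) ≤ x^(2*H-2) := Real.rpow_nonneg (le_of_lt hx) _
    rw [Mb, if_pos hx1]
    calc Gfun H lam m l x ≤ y ^ (2*H-3) * ((m:ℝ) * (E*y)^(m-1)) := h3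
      _ = (m:ℝ) * E^(m-1) * (y^(m-2) * (y * y^(2*H-3))) := h4
      _ ≤ (m:ℝ) * E^(m-1) * (2^(m-2) * x^(2*H-2)) := by
          apply mul_le_mul_of_nonneg_left h5
          positivity
      _ = ((m:ℝ) * (E^(m-1) * 2^(m-2))) * x^(2*H-2) := h6
      _ ≤ Cbig lam m * x^(2*H-2) := mul_le_mul_of_nonneg_right h7 hxr2
  · -- large x regime
    push_neg at hx1
    have hTle : T ≤ 2 * (l:ℝ) := by
      have h := Tg_le_card (l := l) (k := k) hlam
      rw [hTdef]
      linarith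
    have h2 : (T ^ m - (T - 1) ^ m) / (l:ℝ) ^ (m - 1) ≤ (m:ℝ) * 2 ^ (m-1) := by
      rw [div_le_iff₀ (by positivity)]
      calc T ^ m - (T-1)^m ≤ (m:ℝ) * T ^ (m-1) := hdiff
        _ ≤ (m:ℝ) * (2*(l:ℝ)) ^ (m-1) :=
            mul_le_mul_of_nonneg_left (pow_le_pow_left₀ hT0 hTle _) hm0
        _ = (m:ℝ) * 2^(m-1) * (l:ℝ)^(m-1) := by rw [mul_pow]; ring
    have h3 : Gfun H lam m l x ≤ y ^ (2*H-3) * ((m:ℝ) * 2^(m-1)) := by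
      rw [hGeq]
      exact mul_le_mul_of_nonneg_left h2 hyr0
    have h4 : y ^ (2*H-3) ≤ x ^ (2*H-3) :=
      Real.rpow_le_rpow_of_nonpos hx (le_of_lt hxy) (by linarith)
    have h5 : (m:ℝ) * 2^(m-1) ≤ Cbig lam m := by
      rw [hCbig]
      apply mul_le_mul_of_nonneg_left _ hm0
      calc (2:ℝ)^(m-1) ≤ 2^m := pow_le_pow_right₀ one_le_two (by omega)
        _ ≤ (2*(1+E))^m := pow_le_pow_left₀ (by norm_num) (by linarith) m
    have hxr : (0:ℝ) ≤ x ^ (2*H-3) := Real.rpow_nonneg (le_of_lt hx) _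
    rw [Mb, if_neg (by linarith : ¬ x ≤ 1)]
    calc Gfun H lam m l x ≤ y ^ (2*H-3) * ((m:ℝ) * 2^(m-1)) := h3
      _ ≤ x ^ (2*H-3) * ((m:ℝ) * 2^(m-1)) := by
          apply mul_le_mul_of_nonneg_right h4
          positivity
      _ ≤ x ^ (2*H-3) * Cbig lam m := mul_le_mul_of_nonneg_left h5 hxr
      _ = Cbig lam m * x ^ (2*H-3) := mul_comm _ _

lemma Mb_integrable (hH2 : 1/2 < H) (hH1 : H < 1) :
    IntegrableOn (Mb H lam m) (Ioi (0:ℝ)) := by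
  have h1 : IntegrableOn (fun x : ℝ => Cbig lam m * x ^ (2*H-2)) (Ioc (0:ℝ) 1) := by
    have h := intervalIntegral.intervalIntegrable_rpow' (a := 0) (b := 1)
      (by linarith : (-1:ℝ) < 2*H-2)
    rw [intervalIntegrable_iff_integrableOn_Ioc_of_le (by norm_num)] at h
    exact h.const_mul _
  have h2 : IntegrableOn (fun x : ℝ => Cbig lam m * x ^ (2*H-3)) (Ioi (1:ℝ)) :=
    (integrableOn_Ioi_rpow_of_lt (by linarith) one_pos).const_mul _
  have h1' : IntegrableOn (Mb H lam m) (Ioc (0:ℝ) 1) := by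
    apply IntegrableOn.congr_fun h1 _ measurableSet_Ioc
    intro x hx
    rw [Mb, if_pos hx.2]
  have h2' : IntegrableOn (Mb H lam m) (Ioi (1:ℝ)) := by
    apply IntegrableOn.congr_fun h2 _ measurableSet_Ioi
    intro x hx
    rw [Mb, if_neg (not_le.mpr hx)]
  have hu : Ioc (0:ℝ) 1 ∪ Ioi 1 = Ioi 0 := Ioc_union_Ioi_eq_Ioi zero_le_one
  rw [← hu]
  exact h1'.union h2'

lemma Gfun_measurable (l : ℕ) : Measurable (Gfun H lam m l) := by
  have h : Gfun H lam m l = (gk H lam m l) ∘ (fun x : ℝ => ⌊(l:ℝ) * x⌋₊) := rfl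
  rw [h]
  exact measurable_from_top.comp (Nat.measurable_floor.comp (measurable_id.const_mul _))

lemma gk_div (hm : 2 ≤ m) {l : ℕ} (hl : 1 ≤ l) (k : ℕ) :
    gk H lam m l k * (1 / (l:ℝ))
      = Fterm H lam m l k * ((l:ℝ) ^ ((m:ℝ) + 2*H - 3))⁻¹ := by
  have hl0 : (0:ℝ) < (l:ℝ) := by exact_mod_cast hl
  have hk0 : (0:ℝ) < (k:ℝ) + 1 := by positivity
  have key0 : (l:ℝ) ^ (m-1 : ℕ) * (l:ℝ) = (l:ℝ) ^ (m : ℕ) := by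
    rw [← pow_succ]
    congr 1
    omega
  have key : (l:ℝ) ^ (2*H-3) * ((l:ℝ) ^ (m-1 : ℕ) * (l:ℝ))
      = (l:ℝ) ^ ((m:ℝ) + 2*H - 3) := by
    rw [key0, ← Real.rpow_natCast (l:ℝ) m, ← Real.rpow_add hl0]
    congr 1
    ring
  rw [gk, Fterm, Real.div_rpow (le_of_lt hk0) (le_of_lt hl0), ← key]
  simp only [wgt]
  have h1 : ((l:ℝ) ^ (2*H-3)) ≠ 0 := ne_of_gt (Real.rpow_pos_of_pos hl0 _)
  have h2 : ((l:ℝ) ^ (m-1:ℕ)) ≠ 0 := by positivity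
  have h3 : ((k:ℝ)+1) ^ (2*H-3) ≠ 0 := ne_of_gt (Real.rpow_pos_of_pos hk0 _)
  field_simp

lemma Gfun_integral (hH2 : 1/2 < H) (hH1 : H < 1) (hlam : 0 < lam) (hm : 2 ≤ m)
    {l : ℕ} (hl : 1 ≤ l) :
    ∫ x in Ioi (0:ℝ), Gfun H lam m l x
      = useq H lam m l / (l:ℝ) ^ ((m:ℝ) + 2*H - 3) := by
  have hl0 : (0:ℝ) < (l:ℝ) := by exact_mod_cast hl
  have hmeas := Gfun_measurable (H := H) (lam := lam) (m := m) l
  have hint : IntegrableOn (Gfun H lam m l) (Ioi (0:ℝ)) := by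
    apply Integrable.mono' (Mb_integrable hH2 hH1) hmeas.aestronglyMeasurable
    rw [ae_restrict_iff' measurableSet_Ioi]
    filter_upwards with x
    intro hx
    rw [Real.norm_eq_abs, abs_of_nonneg (Gfun_nonneg hlam)]
    exact Gfun_le hH2 hH1 hlam hm l hx
  set s : ℕ → Set ℝ := fun k => Ico ((k:ℝ)/(l:ℝ)) (((k:ℝ)+1)/(l:ℝ)) with hs
  have hunion : (⋃ k, s k) = Ici (0:ℝ) := by
    ext z
    simp only [hs, mem_iUnion, mem_Ico, mem_Ici]
    constructor
    · rintro ⟨k, hk1, -⟩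
      have hk0 : (0:ℝ) ≤ (k:ℝ)/(l:ℝ) := by positivity
      linarith
    · intro hz
      refine ⟨⌊(l:ℝ)*z⌋₊, ?_, ?_⟩
      · rw [div_le_iff₀ hl0]
        have h := Nat.floor_le (mul_nonneg (le_of_lt hl0) hz)
        have hc := mul_comm (l:ℝ) z
        linarith
      · rw [lt_div_iff₀ hl0]
        have h := Nat.lt_floor_add_one ((l:ℝ)*z)
        have hc := mul_comm (l:ℝ) z
        linarith
  have hmeasS : ∀ k, MeasurableSet (s k) := fun k => measurableSet_Ico
  have hdisj : Pairwise (Function.onFun Disjoint s) := by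
    intro i j hij
    simp only [hs, Function.onFun]
    rw [Set.Ico_disjoint_Ico]
    rcases lt_or_gt_of_ne hij with h | h
    · have hij' : (i:ℝ) + 1 ≤ (j:ℝ) := by exact_mod_cast h
      calc min (((i:ℝ)+1)/(l:ℝ)) (((j:ℝ)+1)/(l:ℝ)) ≤ ((i:ℝ)+1)/(l:ℝ) := min_le_left _ _
        _ ≤ (j:ℝ)/(l:ℝ) := by gcongr
        _ ≤ max ((i:ℝ)/(l:ℝ)) ((j:ℝ)/(l:ℝ)) := le_max_right _ _
    · have hij' : (j:ℝ) + 1 ≤ (i:ℝ) := by exact_mod_cast h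
      calc min (((i:ℝ)+1)/(l:ℝ)) (((j:ℝ)+1)/(l:ℝ)) ≤ ((j:ℝ)+1)/(l:ℝ) := min_le_right _ _
        _ ≤ (i:ℝ)/(l:ℝ) := by gcongr
        _ ≤ max ((i:ℝ)/(l:ℝ)) ((j:ℝ)/(l:ℝ)) := le_max_left _ _
  have hint2 : IntegrableOn (Gfun H lam m l) (⋃ k, s k) := by
    rw [hunion, integrableOn_Ici_iff_integrableOn_Ioi]
    exact hint
  have key : ∫ x in Ioi (0:ℝ), Gfun H lam m l x
      = ∑' k, ∫ x in s k, Gfun H lam m l x := by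
    rw [← integral_Ici_eq_integral_Ioi, ← hunion, integral_iUnion hmeasS hdisj hint2]
  have hpiece : ∀ k : ℕ, ∫ x in s k, Gfun H lam m l x = gk H lam m l k * (1/(l:ℝ)) := by
    intro k
    have hconst : ∀ x ∈ s k, Gfun H lam m l x = gk H lam m l k := by
      intro x hxk
      simp only [hs, mem_Ico] at hxk
      have hq0 : (0:ℝ) ≤ (k:ℝ)/(l:ℝ) := by positivity
      have hx0 : 0 ≤ x := le_trans hq0 hxk.1
      have hlx0 : 0 ≤ (l:ℝ) * x := mul_nonneg (le_of_lt hl0) hx0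
      have hb1 : (k:ℝ) ≤ x * (l:ℝ) := (div_le_iff₀ hl0).1 hxk.1
      have hb2 : x * (l:ℝ) < (k:ℝ) + 1 := (lt_div_iff₀ hl0).1 hxk.2
      have hc := mul_comm (l:ℝ) x
      have hfl : ⌊(l:ℝ) * x⌋₊ = k := by
        rw [Nat.floor_eq_iff hlx0]
        constructor
        · linarith
        · linarith
      rw [Gfun, hfl]
    rw [setIntegral_congr_fun (hmeasS k) hconst, setIntegral_const]
    simp only [hs]
    rw [Measure.real, Real.volume_Ico]
    have hlen : ((k:ℝ)+1)/(l:ℝ) - (k:ℝ)/(l:ℝ) = 1/(l:ℝ) := by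
      rw [div_sub_div_same]
      norm_num
    rw [hlen, ENNReal.toReal_ofReal (by positivity), smul_eq_mul, mul_comm]
  rw [key, tsum_congr hpiece, tsum_congr (fun k => gk_div (H := H) hm hl k),
    tsum_mul_right, div_eq_mul_inv]
  rfl

/-- Pointwise convergence `G_ℓ(x) → h(x)` for `x > 0`. -/
lemma Gfun_tendsto (hlam : 0 < lam) (hm : 2 ≤ m) {x : ℝ} (hx : 0 < x) :
    Tendsto (fun l : ℕ => Gfun H lam m l x) atTop (nhds (hfun H lam m x)) := by
  set kl : ℕ → ℕ := fun l => ⌊(l:ℝ) * x⌋₊ with hkl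
  have hx0 : x ≠ 0 := ne_of_gt hx
  -- (k_l + 1)/l → x
  have h1 : Tendsto (fun l : ℕ => ((kl l : ℝ) + 1)/(l:ℝ)) atTop (nhds x) := by
    have hupper : Tendsto (fun l : ℕ => x + 1/(l:ℝ)) atTop (nhds x) := by
      simpa using tendsto_const_nhds.add (tendsto_one_div_atTop_nhds_zero_nat : Tendsto (fun n : ℕ => 1/(n:ℝ)) atTop (nhds 0))
    apply tendsto_of_tendsto_of_tendsto_of_le_of_le'
      (tendsto_const_nhds : Tendsto (fun _ : ℕ => x) atTop (nhds x)) hupper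
    · filter_upwards [eventually_ge_atTop 1] with l hl
      have hl0 : (0:ℝ) < (l:ℝ) := by exact_mod_cast hl
      have h := Nat.lt_floor_add_one ((l:ℝ)*x)
      rw [le_div_iff₀ hl0]
      have hc := mul_comm (l:ℝ) x
      linarith
    · filter_upwards [eventually_ge_atTop 1] with l hl
      have hl0 : (0:ℝ) < (l:ℝ) := by exact_mod_cast hl
      have h := Nat.floor_le (mul_nonneg (le_of_lt hl0) (le_of_lt hx))
      rw [div_le_iff₀ hl0]
      have hc := mul_comm (l:ℝ) x
      have hinv : 1/(l:ℝ) * (l:ℝ) = 1 := by field_simp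
      nlinarith
  -- l/(k_l+1) → 1/x
  have h2 : Tendsto (fun l : ℕ => (l:ℝ)/((kl l : ℝ) + 1)) atTop (nhds x⁻¹) := by
    apply (h1.inv₀ hx0).congr
    intro l
    rw [inv_div]
  have hsl : ∀ l : ℕ, 0 < lam/((kl l : ℝ)+1) := fun l => by positivity
  have h3 : Tendsto (fun l : ℕ => lam * ((l:ℝ)/((kl l:ℝ)+1))) atTop (nhds (lam * x⁻¹)) :=
    h2.const_mul lam
  -- s_l → 0
  have h4 : Tendsto (fun l : ℕ => lam/((kl l : ℝ)+1)) atTop (nhds 0) := by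
    have hs2 : Tendsto (fun l : ℕ => (1/(l:ℝ)) * (lam * ((l:ℝ)/((kl l:ℝ)+1)))) atTop
        (nhds (0 * (lam * x⁻¹))) := tendsto_one_div_atTop_nhds_zero_nat.mul h3
    rw [zero_mul] at hs2
    apply hs2.congr'
    filter_upwards [eventually_ge_atTop 1] with l hl
    have hl0 : ((l:ℝ)) ≠ 0 := by
      have : (0:ℝ) < (l:ℝ) := by exact_mod_cast hl
      exact ne_of_gt this
    have hk0 : ((kl l : ℝ)+1) ≠ 0 := by positivity
    field_simp
  -- l·s_l → lam/x
  have h5 : Tendsto (fun l : ℕ => (l:ℝ) * (lam/((kl l:ℝ)+1))) atTop (nhds (lam/x)) := by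
    have heq : lam * x⁻¹ = lam / x := (div_eq_mul_inv lam x).symm
    rw [← heq]
    apply h3.congr
    intro l
    ring
  -- (1-e^{-s})/s → 1 along s_l
  have hslope : Tendsto (fun l : ℕ =>
      (1 - Real.exp (-(lam/((kl l:ℝ)+1)))) / (lam/((kl l:ℝ)+1))) atTop (nhds 1) := by
    have hder : HasDerivAt (fun t : ℝ => 1 - Real.exp (-t)) 1 0 := by
      have h := ((Real.hasDerivAt_exp (-0)).comp 0 (hasDerivAt_neg 0)).const_sub 1
      norm_num at h
      exact h
    have hslope0 := hasDerivAt_iff_tendsto_slope.1 hder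
    have hcomp : Tendsto (fun l : ℕ => lam/((kl l:ℝ)+1)) atTop (nhdsWithin 0 {(0:ℝ)}ᶜ) :=
      tendsto_nhdsWithin_of_tendsto_nhds_of_eventually_within _ h4
        (Eventually.of_forall fun l => Set.mem_compl_singleton_iff.mpr (ne_of_gt (hsl l)))
    have hc := hslope0.comp hcomp
    apply hc.congr
    intro l
    simp only [Function.comp]
    rw [slope_def_field]
    norm_num
  -- l(1-ρ_{k_l}) → lam/x
  have h6 : Tendsto (fun l : ℕ => (l:ℝ) * (1 - rho lam (kl l))) atTop (nhds (lam/x)) := by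
    have hmul := h5.mul hslope
    rw [mul_one] at hmul
    apply hmul.congr
    intro l
    have hs0 : lam/((kl l:ℝ)+1) ≠ 0 := ne_of_gt (hsl l)
    rw [rho, neg_div]
    field_simp
  -- ρ^{l+1} → e^{-lam/x}
  have h7 : Tendsto (fun l : ℕ => rho lam (kl l) ^ (l+1)) atTop
      (nhds (Real.exp (-(lam/x)))) := by
    have harg : Tendsto (fun l : ℕ => -(((l:ℝ)+1) * (lam/((kl l:ℝ)+1)))) atTop
        (nhds (-(lam/x))) := by
      have hadd := h5.add h4
      rw [add_zero] at hadd
      apply (hadd.neg).congr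
      intro l
      ring
    have hc := (Real.continuous_exp.tendsto _).comp harg
    apply hc.congr
    intro l
    simp only [Function.comp]
    rw [rho, neg_div, ← Real.exp_nat_mul]
    congr 1
    push_cast
    ring
  -- T_l/l → φ(x)
  have hTl : Tendsto (fun l : ℕ => Tg lam l (kl l) / (l:ℝ)) atTop (nhds (phiF lam x)) := by
    have hnum : Tendsto (fun l : ℕ => 1 - rho lam (kl l) ^ (l+1)) atTop
        (nhds (1 - Real.exp (-(lam/x)))) := tendsto_const_nhds.sub h7
    have hlamx : lam/x ≠ 0 := by positivity
    have hden := h6.inv₀ hlamx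
    have hmul := hnum.mul hden
    have hval : (1 - Real.exp (-(lam/x))) * (lam/x)⁻¹ = phiF lam x := by
      rw [phiF, neg_div]
      field_simp
    rw [hval] at hmul
    apply hmul.congr'
    filter_upwards [eventually_ge_atTop 1] with l hl
    have hl0 : ((l:ℝ)) ≠ 0 := by
      have : (0:ℝ) < (l:ℝ) := by exact_mod_cast hl
      exact ne_of_gt this
    have hr0 : 1 - rho lam (kl l) ≠ 0 := ne_of_gt (one_sub_rho_pos hlam)
    rw [Tg, div_div, ← div_eq_mul_inv, mul_comm (1 - rho lam (kl l)) ((l:ℝ))]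
  -- (T_l - 1)/l → φ(x)
  have hT1l : Tendsto (fun l : ℕ => (Tg lam l (kl l) - 1)/(l:ℝ)) atTop
      (nhds (phiF lam x)) := by
    have hsub := hTl.sub tendsto_one_div_atTop_nhds_zero_nat
    rw [sub_zero] at hsub
    apply hsub.congr
    intro l
    rw [sub_div]
  -- second factor
  have hP2 : Tendsto (fun l : ℕ =>
      (Tg lam l (kl l) ^ m - (Tg lam l (kl l) - 1)^m)/(l:ℝ)^(m-1)) atTop
      (nhds ((m:ℝ) * phiF lam x ^ (m-1))) := by
    have hsum : Tendsto (fun l : ℕ => ∑ i ∈ Finset.range m,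
        (Tg lam l (kl l)/(l:ℝ))^i * ((Tg lam l (kl l) - 1)/(l:ℝ))^(m-1-i)) atTop
        (nhds (∑ i ∈ Finset.range m, phiF lam x ^ i * phiF lam x ^ (m-1-i))) := by
      apply tendsto_finset_sum
      intro i _
      exact (hTl.pow i).mul (hT1l.pow (m-1-i))
    have hval : ∑ i ∈ Finset.range m, phiF lam x ^ i * phiF lam x ^ (m-1-i)
        = (m:ℝ) * phiF lam x ^ (m-1) := by
      rw [Finset.sum_congr rfl (fun i hi => ?_), Finset.sum_const, Finset.card_range,
        nsmul_eq_mul]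
      rw [← pow_add]
      congr 1
      rw [Finset.mem_range] at hi
      omega
    rw [hval] at hsum
    apply hsum.congr'
    filter_upwards [eventually_ge_atTop 1] with l hl
    rw [diff_eq, Finset.sum_div]
    apply Finset.sum_congr rfl
    intro i hi
    rw [Finset.mem_range] at hi
    rw [div_pow, div_pow, div_mul_div_comm, ← pow_add]
    congr 2
    omega
  -- first factor and conclusion
  have hP1 : Tendsto (fun l : ℕ => (((kl l : ℝ)+1)/(l:ℝ))^(2*H-3)) atTop
      (nhds (x ^ (2*H-3))) := h1.rpow_const (Or.inl (ne_of_gt hx))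
  have hfinal := hP1.mul hP2
  apply hfinal.congr
  intro l
  rfl

lemma hfun_pos (hlam : 0 < lam) (hm : 2 ≤ m) {x : ℝ} (hx : 0 < x) :
    0 < hfun H lam m x := by
  rw [hfun]
  have h1 : 0 < x ^ (2*H-3) := Real.rpow_pos_of_pos hx _
  have h2 : 0 < phiF lam x := by
    rw [phiF]
    have h3 : Real.exp (-lam/x) < 1 := by
      rw [Real.exp_lt_one_iff, neg_div]
      have : 0 < lam / x := by positivity
      linarith
    have h4 : 0 < 1 - Real.exp (-lam/x) := by linarith
    positivity
  have hm0 : (0:ℝ) < (m:ℝ) := by exact_mod_cast (by omega : 0 < m)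
  positivity

lemma hfun_measurable : Measurable (hfun H lam m) := by
  have hphi : Measurable (phiF lam) := by
    apply Measurable.div_const
    apply measurable_id.mul
    apply measurable_const.sub
    exact Real.measurable_exp.comp (measurable_const.div measurable_id)
  apply Measurable.mul
  · fun_prop
  · exact measurable_const.mul (hphi.pow_const (m-1))

/-- Convergence of `u_ℓ / ℓ^{m+2H-3}` to a positive constant. -/
lemma useq_tendsto (hH2 : 1/2 < H) (hH1 : H < 1) (hlam : 0 < lam) (hm : 2 ≤ m) :
    ∃ c : ℝ, 0 < c ∧
      Tendsto (fun l : ℕ => useq H lam m l / (l:ℝ) ^ ((m:ℝ) + 2*H - 3)) atTop (nhds c) := by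
  have hGmeas : ∀ l : ℕ,
      AEStronglyMeasurable (Gfun H lam m l) (volume.restrict (Ioi (0:ℝ))) :=
    fun l => (Gfun_measurable l).aestronglyMeasurable
  have hbound : ∀ l : ℕ, ∀ᵐ a ∂(volume.restrict (Ioi (0:ℝ))),
      ‖Gfun H lam m l a‖ ≤ Mb H lam m a := by
    intro l
    rw [ae_restrict_iff' measurableSet_Ioi]
    filter_upwards with a ha
    rw [Real.norm_eq_abs, abs_of_nonneg (Gfun_nonneg hlam)]
    exact Gfun_le hH2 hH1 hlam hm l ha
  have hlim : ∀ᵐ a ∂(volume.restrict (Ioi (0:ℝ))),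
      Tendsto (fun l : ℕ => Gfun H lam m l a) atTop (nhds (hfun H lam m a)) := by
    rw [ae_restrict_iff' measurableSet_Ioi]
    filter_upwards with a ha
    exact Gfun_tendsto hlam hm ha
  have hDCT := MeasureTheory.tendsto_integral_of_dominated_convergence
    (μ := volume.restrict (Ioi (0:ℝ))) (F := fun l => Gfun H lam m l)
    (f := hfun H lam m) (Mb H lam m) hGmeas (Mb_integrable hH2 hH1) hbound hlim
  refine ⟨∫ a in Ioi (0:ℝ), hfun H lam m a, ?_, ?_⟩
  · -- positivity of the limit
    have hint : IntegrableOn (hfun H lam m) (Ioi (0:ℝ)) := by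
      apply Integrable.mono' (Mb_integrable hH2 hH1) hfun_measurable.aestronglyMeasurable
      rw [ae_restrict_iff' measurableSet_Ioi]
      filter_upwards with a ha
      rw [Real.norm_eq_abs, abs_of_nonneg (le_of_lt (hfun_pos hlam hm ha))]
      apply le_of_tendsto (Gfun_tendsto hlam hm ha)
      filter_upwards with l
      exact Gfun_le hH2 hH1 hlam hm l ha
    have hnn' : ∀ᵐ a ∂(volume.restrict (Ioi (0:ℝ))), 0 ≤ hfun H lam m a := by
      rw [ae_restrict_iff' measurableSet_Ioi]
      filter_upwards with a ha
      exact le_of_lt (hfun_pos hlam hm ha)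
    have hnn : 0 ≤ᵐ[volume.restrict (Ioi (0:ℝ))] hfun H lam m := hnn'
    rw [MeasureTheory.setIntegral_pos_iff_support_of_nonneg_ae hnn hint]
    have hsub : Ioi (0:ℝ) ⊆ Function.support (hfun H lam m) ∩ Ioi 0 :=
      fun a ha => ⟨ne_of_gt (hfun_pos hlam hm ha), ha⟩
    have htop : volume (Function.support (hfun H lam m) ∩ Ioi (0:ℝ)) = ⊤ :=
      top_le_iff.1 (Real.volume_Ioi ▸ measure_mono hsub)
    rw [htop]
    exact ENNReal.zero_lt_top
  · apply hDCT.congr'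
    filter_upwards [eventually_ge_atTop 1] with l hl
    exact Gfun_integral hH2 hH1 hlam hm hl

/-- Riemann-sum limit `∑_{ℓ<n} ℓ^b / n^{b+1} → 1/(b+1)`. -/
lemma sum_rpow_div {b : ℝ} (hb : 0 < b) :
    Tendsto (fun n : ℕ => (∑ l ∈ Finset.range n, (l:ℝ)^b) / (n:ℝ)^(b+1)) atTop
      (nhds (1/(b+1))) := by
  have hb1 : (0:ℝ) < b + 1 := by linarith
  have hmono : ∀ n : ℕ, MonotoneOn (fun y : ℝ => y ^ b) (Icc ((0:ℕ):ℝ) ((n:ℕ):ℝ)) :=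
    fun n y hy z _ hyz => Real.rpow_le_rpow (by exact_mod_cast hy.1) hyz (le_of_lt hb)
  have hI : ∀ n : ℕ, ∫ y in ((0:ℕ):ℝ)..((n:ℕ):ℝ), y ^ b = (n:ℝ)^(b+1)/(b+1) := by
    intro n
    rw [integral_rpow (Or.inl (by linarith))]
    norm_num
    rw [Real.zero_rpow (ne_of_gt hb1)]
    ring
  have key1 : ∀ n : ℕ, (∑ l ∈ Finset.range n, (l:ℝ)^b) ≤ (n:ℝ)^(b+1)/(b+1) := by
    intro n
    have h1 := MonotoneOn.sum_le_integral_Ico (Nat.zero_le n) (hmono n)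
    rw [hI n] at h1
    rw [← Nat.Ico_zero_eq_range]
    exact h1
  have key2 : ∀ n : ℕ, (n:ℝ)^(b+1)/(b+1) ≤ (∑ l ∈ Finset.range n, (l:ℝ)^b) + (n:ℝ)^b := by
    intro n
    have h2 := MonotoneOn.integral_le_sum_Ico (Nat.zero_le n) (hmono n)
    rw [hI n] at h2
    rw [Nat.Ico_zero_eq_range] at h2
    have e1 := Finset.sum_range_succ (fun i : ℕ => ((i:ℕ):ℝ)^b) n
    have e2 := Finset.sum_range_succ' (fun i : ℕ => ((i:ℕ):ℝ)^b) n
    have h0 : (((0:ℕ)):ℝ)^b = 0 := by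
      rw [Nat.cast_zero, Real.zero_rpow (ne_of_gt hb)]
    rw [h0] at e2
    linarith
  apply tendsto_of_tendsto_of_tendsto_of_le_of_le'
    (g := fun n : ℕ => 1/(b+1) - 1/(n:ℝ))
    (h := fun _ : ℕ => 1/(b+1))
  · have : Tendsto (fun n : ℕ => 1/(b+1) - 1/(n:ℝ)) atTop (nhds (1/(b+1) - 0)) :=
      tendsto_const_nhds.sub tendsto_one_div_atTop_nhds_zero_nat
    rw [sub_zero] at this
    exact this
  · exact tendsto_const_nhds
  · filter_upwards [eventually_ge_atTop 1] with n hn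
    have hn0 : (0:ℝ) < (n:ℝ) := by exact_mod_cast hn
    have hp : (0:ℝ) < (n:ℝ)^(b+1) := Real.rpow_pos_of_pos hn0 _
    rw [le_div_iff₀ hp]
    have hsplit : (n:ℝ)^(b+1) = (n:ℝ)^b * (n:ℝ) := by
      rw [Real.rpow_add hn0, Real.rpow_one]
    calc (1/(b+1) - 1/(n:ℝ)) * (n:ℝ)^(b+1)
        = (n:ℝ)^(b+1)/(b+1) - (n:ℝ)^b := by
          rw [hsplit]
          field_simp
      _ ≤ ∑ l ∈ Finset.range n, (l:ℝ)^b := by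
          have := key2 n
          rw [hsplit] at this ⊢
          linarith
  · filter_upwards [eventually_ge_atTop 1] with n hn
    have hn0 : (0:ℝ) < (n:ℝ) := by exact_mod_cast hn
    have hp : (0:ℝ) < (n:ℝ)^(b+1) := Real.rpow_pos_of_pos hn0 _
    have h := key1 n
    have h2 : (∑ l ∈ Finset.range n, (l:ℝ)^b) * (b+1) ≤ (n:ℝ)^(b+1) := by
      rw [← le_div_iff₀ hb1]
      exact h
    rw [div_le_div_iff₀ hp hb1]
    linarith

/-- Weighted Cesàro limit: if `v_ℓ/ℓ^b → c` then `(∑_{ℓ<n} v_ℓ)/n^{b+1} → c/(b+1)`. -/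
lemma cesaro_rpow {b c : ℝ} (hb : 0 < b) {v : ℕ → ℝ}
    (hv : Tendsto (fun l : ℕ => v l / (l:ℝ)^b) atTop (nhds c)) :
    Tendsto (fun n : ℕ => (∑ l ∈ Finset.range n, v l) / (n:ℝ)^(b+1)) atTop
      (nhds (c/(b+1))) := by
  set g : ℕ → ℝ := fun l => if l = 0 then 0 else |v l - c * (l:ℝ)^b| / (l:ℝ)^b with hgdef
  have hg0 : Tendsto g atTop (nhds 0) := by
    have h1 : Tendsto (fun l : ℕ => |v l / (l:ℝ)^b - c|) atTop (nhds 0) := by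
      have h := (hv.sub_const c).abs
      rw [sub_self, abs_zero] at h
      exact h
    apply h1.congr'
    filter_upwards [eventually_ge_atTop 1] with l hl
    have hl0 : (0:ℝ) < (l:ℝ) := by exact_mod_cast hl
    have hp : (0:ℝ) < (l:ℝ)^b := Real.rpow_pos_of_pos hl0 b
    have heq : v l/(l:ℝ)^b - c = (v l - c*(l:ℝ)^b)/(l:ℝ)^b := by
      field_simp
    show |v l / (l:ℝ)^b - c| = if l = 0 then (0:ℝ) else |v l - c * (l:ℝ)^b| / (l:ℝ)^b
    rw [if_neg (by omega), heq, abs_div, abs_of_pos hp]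
  have hces := hg0.cesaro
  have herr : Tendsto (fun n : ℕ =>
      (∑ l ∈ Finset.range n, (v l - c * (l:ℝ)^b)) / (n:ℝ)^(b+1)) atTop (nhds 0) := by
    have h2 : Tendsto (fun n : ℕ => ((n:ℝ)^(b+1))⁻¹) atTop (nhds 0) := by
      apply Tendsto.inv_tendsto_atTop
      exact (tendsto_rpow_atTop (by linarith)).comp tendsto_natCast_atTop_atTop
    have hbnd : Tendsto (fun n : ℕ => |v 0| * ((n:ℝ)^(b+1))⁻¹
        + (n:ℝ)⁻¹ * ∑ l ∈ Finset.range n, g l) atTop (nhds 0) := by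
      have h3 := (h2.const_mul (|v 0|)).add hces
      simpa using h3
    apply squeeze_zero_norm' _ hbnd
    filter_upwards [eventually_ge_atTop 1] with n hn
    have hn0 : (0:ℝ) < (n:ℝ) := by exact_mod_cast hn
    have hp : (0:ℝ) < (n:ℝ)^(b+1) := Real.rpow_pos_of_pos hn0 _
    have hsplit : (n:ℝ)^(b+1) = (n:ℝ)^b * (n:ℝ) := by
      rw [Real.rpow_add hn0, Real.rpow_one]
    rw [Real.norm_eq_abs, abs_div, abs_of_pos hp, div_le_iff₀ hp]
    have hterm : ∀ l ∈ Finset.range n, |v l - c * (l:ℝ)^b|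
        ≤ (if l = 0 then |v 0| else 0) + g l * (n:ℝ)^b := by
      intro l hlr
      rw [Finset.mem_range] at hlr
      rcases Nat.eq_zero_or_pos l with h0 | h0
      · subst h0
        rw [if_pos rfl]
        have hg00 : g 0 = 0 := by
          show (if (0:ℕ) = 0 then (0:ℝ) else _) = 0
          rw [if_pos rfl]
        rw [Nat.cast_zero, Real.zero_rpow (ne_of_gt hb), mul_zero, sub_zero, hg00,
          zero_mul, add_zero]
      · rw [if_neg (by omega)]
        have hl0 : (0:ℝ) < (l:ℝ) := by exact_mod_cast h0
        have hpl : (0:ℝ) < (l:ℝ)^b := Real.rpow_pos_of_pos hl0 _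
        have hgl : g l = |v l - c*(l:ℝ)^b|/(l:ℝ)^b := by
          show (if l = 0 then (0:ℝ) else |v l - c * (l:ℝ)^b| / (l:ℝ)^b) = _
          rw [if_neg (by omega)]
        rw [hgl, zero_add, div_mul_eq_mul_div, le_div_iff₀ hpl]
        have hln : (l:ℝ)^b ≤ (n:ℝ)^b := by
          apply Real.rpow_le_rpow (le_of_lt hl0) _ (le_of_lt hb)
          exact_mod_cast le_of_lt hlr
        exact mul_le_mul_of_nonneg_left hln (abs_nonneg _)
    calc |∑ l ∈ Finset.range n, (v l - c*(l:ℝ)^b)|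
        ≤ ∑ l ∈ Finset.range n, |v l - c*(l:ℝ)^b| := Finset.abs_sum_le_sum_abs _ _
      _ ≤ ∑ l ∈ Finset.range n, ((if l = 0 then |v 0| else 0) + g l * (n:ℝ)^b) :=
          Finset.sum_le_sum hterm
      _ = |v 0| + (∑ l ∈ Finset.range n, g l) * (n:ℝ)^b := by
          rw [Finset.sum_add_distrib,
            Finset.sum_ite_eq' (Finset.range n) 0 (fun _ => |v 0|),
            if_pos (Finset.mem_range.2 (by omega)), ← Finset.sum_mul]
      _ = (|v 0| * ((n:ℝ)^(b+1))⁻¹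
            + (n:ℝ)⁻¹ * ∑ l ∈ Finset.range n, g l) * (n:ℝ)^(b+1) := by
          rw [add_mul]
          have e1 : |v 0| * ((n:ℝ)^(b+1))⁻¹ * (n:ℝ)^(b+1) = |v 0| := by
            field_simp
          have e2 : (n:ℝ)⁻¹ * (∑ l ∈ Finset.range n, g l) * (n:ℝ)^(b+1)
              = (∑ l ∈ Finset.range n, g l) * (n:ℝ)^b := by
            rw [hsplit]
            field_simp
          rw [e1, e2]
  have hsum := herr.add ((sum_rpow_div hb).const_mul c)
  have hval : (0:ℝ) + c * (1/(b+1)) = c/(b+1) := by ring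
  rw [hval] at hsum
  apply hsum.congr
  intro n
  rw [Finset.sum_sub_distrib, ← Finset.mul_sum]
  ring

end Analysis

end Stmt14

/-- there is a finite strictly positive constant `D_m` such that
`κ_m(n)/n^{m-2(1-H)} → D_m` as `n → ∞`: the `m`-th cumulant of the centered partial sum
grows like `D_m n^{m-2(1-H)}` (up to the convergent slowly varying factor `L(n)`). -/
theorem stmt14 (H lam Cm : ℝ) (hH : H ∈ Set.Ioo (1 / 2 : ℝ) 1) (hlam : 0 < lam)
    (hCm : 0 < Cm) (m : ℕ) (hm : 2 ≤ m) :
    ∃ D : ℝ, 0 < D ∧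
      Tendsto (fun n : ℕ =>
          OUcumulant H lam Cm m n / (n : ℝ) ^ ((m : ℝ) - 2 * (1 - H)))
        atTop (nhds D) := by
  obtain ⟨hH2, hH1⟩ := hH
  have hb0 : 0 < (m:ℝ) + 2*H - 3 := by
    have h2 : (2:ℝ) ≤ (m:ℝ) := by exact_mod_cast hm
    linarith
  obtain ⟨c, hc0, hc⟩ := Stmt14.useq_tendsto hH2 hH1 hlam hm
  have hces := Stmt14.cesaro_rpow hb0 hc
  have hD : 0 < Cm * (c/((m:ℝ) + 2*H - 3 + 1)) :=
    mul_pos hCm (div_pos hc0 (by linarith))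
  refine ⟨Cm * (c/((m:ℝ) + 2*H - 3 + 1)), hD, ?_⟩
  have hmain := hces.const_mul Cm
  apply hmain.congr
  intro n
  rw [Stmt14.cumulant_eq hH1 hlam hm Cm n]
  have hexp : (m:ℝ) - 2*(1-H) = (m:ℝ) + 2*H - 3 + 1 := by ring
  rw [hexp]
  ring
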